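/- Let τ = e^{−πi/9}. The subgroup of GL(3,ℂ) generated by the two matrices a = τ·diag(ω², −ω², ω) and b = τ·[[ω/2, −ω/2, ω²/√2],[−ω/2, ω/2, ω²/√2],[ω²/√2, ω²/√2, 0]] is a finite group of order 162. -/

import Mathlib

open Matrix Complex

noncomputable section

/-- ω = e^{2πi/3}, a primitive third root of unity. -/
def ω : ℂ := Complex.exp (2 * Real.pi * Complex.I / 3)

/-- τ = e^{−πi/9}. -/
def τ : ℂ := Complex.exp (-(Real.pi * Complex.I) / 9)

/-- a = τ·diag(ω², −ω², ω). -/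
def ma : Matrix (Fin 3) (Fin 3) ℂ := τ • diagonal ![ω ^ 2, -ω ^ 2, ω]

/-- b = τ·[[ω/2, −ω/2, ω²/√2],[−ω/2, ω/2, ω²/√2],[ω²/√2, ω²/√2, 0]]. -/
def mb : Matrix (Fin 3) (Fin 3) ℂ :=
  τ • !![ω / 2, -ω / 2, ω ^ 2 / (Real.sqrt 2 : ℂ);
         -ω / 2, ω / 2, ω ^ 2 / (Real.sqrt 2 : ℂ);
         ω ^ 2 / (Real.sqrt 2 : ℂ), ω ^ 2 / (Real.sqrt 2 : ℂ), 0]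

def sq2 : ℂ := (Real.sqrt 2 : ℝ)

abbrev M3 := Matrix (Fin 3) (Fin 3) ℂ
abbrev GL3 := GL (Fin 3) ℂ

lemma hτ9 : τ ^ 9 = -1 := by
  rw [τ, ← Complex.exp_nat_mul,
    show ((9:ℕ):ℂ) * (-(Real.pi * Complex.I) / 9) = -(Real.pi * Complex.I) by push_cast; ring,
    show -(Real.pi * Complex.I) = -(Real.pi * Complex.I) from rfl, Complex.exp_neg,
    Complex.exp_pi_mul_I]
  norm_num

lemma hs2 : sq2 ^ 2 = 2 := by
  rw [sq2, ← Complex.ofReal_pow, Real.sq_sqrt (by norm_num : (0:ℝ) ≤ 2)]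
  norm_num

lemma hω : ω = τ ^ 12 := by
  rw [ω, τ, ← Complex.exp_nat_mul]
  rw [Complex.exp_eq_exp_iff_exists_int]
  exact ⟨1, by push_cast; ring⟩

lemma mat3_eq {α : Type*} {a11 a12 a13 a21 a22 a23 a31 a32 a33 b11 b12 b13 b21 b22 b23 b31 b32 b33 : α}
    (h11 : a11 = b11) (h12 : a12 = b12) (h13 : a13 = b13)
    (h21 : a21 = b21) (h22 : a22 = b22) (h23 : a23 = b23)
    (h31 : a31 = b31) (h32 : a32 = b32) (h33 : a33 = b33) :
    !![a11, a12, a13; a21, a22, a23; a31, a32, a33] =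
      !![b11, b12, b13; b21, b22, b23; b31, b32, b33] := by
  subst_vars; rfl

def Am : M3 := !![(1 : ℂ) * τ^7, (0 : ℂ), (0 : ℂ);
  (0 : ℂ), (-1 : ℂ) * τ^7, (0 : ℂ);
  (0 : ℂ), (0 : ℂ), (-1 : ℂ) * τ^4]

def AmI : M3 := !![(-1 : ℂ) * τ^2, (0 : ℂ), (0 : ℂ);
  (0 : ℂ), (1 : ℂ) * τ^2, (0 : ℂ);
  (0 : ℂ), (0 : ℂ), (1 : ℂ) * τ^5]

def Bm : M3 := !![((-1 : ℂ)/2) * τ^4, ((1 : ℂ)/2) * τ^4, ((1 : ℂ)/2) * τ^7 * sq2;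
  ((1 : ℂ)/2) * τ^4, ((-1 : ℂ)/2) * τ^4, ((1 : ℂ)/2) * τ^7 * sq2;
  ((1 : ℂ)/2) * τ^7 * sq2, ((1 : ℂ)/2) * τ^7 * sq2, (0 : ℂ)]

def BmI : M3 := !![((-1 : ℂ)/2) * τ^14, ((1 : ℂ)/2) * τ^14, ((1 : ℂ)/2) * τ^11 * sq2;
  ((1 : ℂ)/2) * τ^14, ((-1 : ℂ)/2) * τ^14, ((1 : ℂ)/2) * τ^11 * sq2;
  ((1 : ℂ)/2) * τ^11 * sq2, ((1 : ℂ)/2) * τ^11 * sq2, (0 : ℂ)]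

def Um : M3 := !![(1 : ℂ) * τ^14, (0 : ℂ), (0 : ℂ);
  (0 : ℂ), (1 : ℂ) * τ^14, (0 : ℂ);
  (0 : ℂ), (0 : ℂ), (1 : ℂ) * τ^8]

def U2m : M3 := !![(-1 : ℂ) * τ^1, (0 : ℂ), (0 : ℂ);
  (0 : ℂ), (-1 : ℂ) * τ^1, (0 : ℂ);
  (0 : ℂ), (0 : ℂ), (-1 : ℂ) * τ^7]

def U3m : M3 := !![(1 : ℂ) * τ^6, (0 : ℂ), (0 : ℂ);
  (0 : ℂ), (1 : ℂ) * τ^6, (0 : ℂ);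
  (0 : ℂ), (0 : ℂ), (1 : ℂ) * τ^6]

def U4m : M3 := !![(1 : ℂ) * τ^2, (0 : ℂ), (0 : ℂ);
  (0 : ℂ), (1 : ℂ) * τ^2, (0 : ℂ);
  (0 : ℂ), (0 : ℂ), (-1 : ℂ) * τ^5]

def U5m : M3 := !![(-1 : ℂ) * τ^7, (0 : ℂ), (0 : ℂ);
  (0 : ℂ), (-1 : ℂ) * τ^7, (0 : ℂ);
  (0 : ℂ), (0 : ℂ), (1 : ℂ) * τ^4]

def U6m : M3 := !![(-1 : ℂ) * τ^3, (0 : ℂ), (0 : ℂ);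
  (0 : ℂ), (-1 : ℂ) * τ^3, (0 : ℂ);
  (0 : ℂ), (0 : ℂ), (-1 : ℂ) * τ^3]

def U7m : M3 := !![(1 : ℂ) * τ^8, (0 : ℂ), (0 : ℂ);
  (0 : ℂ), (1 : ℂ) * τ^8, (0 : ℂ);
  (0 : ℂ), (0 : ℂ), (1 : ℂ) * τ^2]

def U8m : M3 := !![(1 : ℂ) * τ^4, (0 : ℂ), (0 : ℂ);
  (0 : ℂ), (1 : ℂ) * τ^4, (0 : ℂ);
  (0 : ℂ), (0 : ℂ), (-1 : ℂ) * τ^1]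

def Km : M3 := !![((1 : ℂ)/2) + ((1 : ℂ)/2) * τ^6, ((1 : ℂ)/2) + ((-1 : ℂ)/2) * τ^6, (0 : ℂ);
  ((1 : ℂ)/2) + ((-1 : ℂ)/2) * τ^6, ((1 : ℂ)/2) + ((1 : ℂ)/2) * τ^6, (0 : ℂ);
  (0 : ℂ), (0 : ℂ), (-1 : ℂ) * τ^3]

def K2m : M3 := !![((1 : ℂ)/2) + ((-1 : ℂ)/2) * τ^3, ((1 : ℂ)/2) + ((1 : ℂ)/2) * τ^3, (0 : ℂ);
  ((1 : ℂ)/2) + ((1 : ℂ)/2) * τ^3, ((1 : ℂ)/2) + ((-1 : ℂ)/2) * τ^3, (0 : ℂ);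
  (0 : ℂ), (0 : ℂ), (1 : ℂ) * τ^6]

def Cm : M3 := !![((1 : ℂ)/2) * τ^6, ((-1 : ℂ)/2) * τ^6, ((1 : ℂ)/2) * sq2;
  ((1 : ℂ)/2) * τ^6, ((-1 : ℂ)/2) * τ^6, ((-1 : ℂ)/2) * sq2;
  ((-1 : ℂ)/2) * τ^3 * sq2, ((-1 : ℂ)/2) * τ^3 * sq2, (0 : ℂ)]

def C2m : M3 := !![((-1 : ℂ)/2) * τ^3, ((-1 : ℂ)/2) * τ^3, ((1 : ℂ)/2) * τ^6 * sq2;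
  ((1 : ℂ)/2) * τ^3, ((1 : ℂ)/2) * τ^3, ((1 : ℂ)/2) * τ^6 * sq2;
  ((1 : ℂ)/2) * sq2, ((-1 : ℂ)/2) * sq2, (0 : ℂ)]

def Xm : M3 := !![((-1 : ℂ)/2), ((-1 : ℂ)/2), ((-1 : ℂ)/2) * sq2;
  ((-1 : ℂ)/2), ((-1 : ℂ)/2), ((1 : ℂ)/2) * sq2;
  ((-1 : ℂ)/2) * sq2, ((1 : ℂ)/2) * sq2, (0 : ℂ)]

def Qm : M3 := !![((1 : ℂ)/2) * sq2, ((1 : ℂ)/2) * sq2, (0 : ℂ);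
  ((1 : ℂ)/2) * sq2, ((-1 : ℂ)/2) * sq2, (0 : ℂ);
  (0 : ℂ), (0 : ℂ), (1 : ℂ)]

def Kdm : M3 := !![(1 : ℂ), (0 : ℂ), (0 : ℂ);
  (0 : ℂ), (1 : ℂ) * τ^6, (0 : ℂ);
  (0 : ℂ), (0 : ℂ), (1 : ℂ) * τ^12]

def Cqm : M3 := !![(0 : ℂ), (1 : ℂ) * τ^6, (0 : ℂ);
  (0 : ℂ), (0 : ℂ), (1 : ℂ);
  (-1 : ℂ) * τ^3, (0 : ℂ), (0 : ℂ)]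

def Cq2m : M3 := !![(0 : ℂ), (0 : ℂ), (1 : ℂ) * τ^6;
  (-1 : ℂ) * τ^3, (0 : ℂ), (0 : ℂ);
  (0 : ℂ), (1 : ℂ), (0 : ℂ)]

def Xqm : M3 := !![(-1 : ℂ), (0 : ℂ), (0 : ℂ);
  (0 : ℂ), (0 : ℂ), (-1 : ℂ);
  (0 : ℂ), (-1 : ℂ), (0 : ℂ)]

lemma hAAI : Am * AmI = 1 := by
  simp only [Am, AmI, Matrix.mul_fin_three, Matrix.one_fin_three]
  refine mat3_eq ?_ ?_ ?_ ?_ ?_ ?_ ?_ ?_ ?_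
  · linear_combination ((-1 : ℂ)) * hτ9 + ((0 : ℂ)) * hs2
  · linear_combination ((0 : ℂ)) * hτ9 + ((0 : ℂ)) * hs2
  · linear_combination ((0 : ℂ)) * hτ9 + ((0 : ℂ)) * hs2
  · linear_combination ((0 : ℂ)) * hτ9 + ((0 : ℂ)) * hs2
  · linear_combination ((-1 : ℂ)) * hτ9 + ((0 : ℂ)) * hs2
  · linear_combination ((0 : ℂ)) * hτ9 + ((0 : ℂ)) * hs2
  · linear_combination ((0 : ℂ)) * hτ9 + ((0 : ℂ)) * hs2
  · linear_combination ((0 : ℂ)) * hτ9 + ((0 : ℂ)) * hs2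
  · linear_combination ((-1 : ℂ)) * hτ9 + ((0 : ℂ)) * hs2

lemma hAIA : AmI * Am = 1 := by
  simp only [Am, AmI, Matrix.mul_fin_three, Matrix.one_fin_three]
  refine mat3_eq ?_ ?_ ?_ ?_ ?_ ?_ ?_ ?_ ?_
  · linear_combination ((-1 : ℂ)) * hτ9 + ((0 : ℂ)) * hs2
  · linear_combination ((0 : ℂ)) * hτ9 + ((0 : ℂ)) * hs2
  · linear_combination ((0 : ℂ)) * hτ9 + ((0 : ℂ)) * hs2
  · linear_combination ((0 : ℂ)) * hτ9 + ((0 : ℂ)) * hs2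
  · linear_combination ((-1 : ℂ)) * hτ9 + ((0 : ℂ)) * hs2
  · linear_combination ((0 : ℂ)) * hτ9 + ((0 : ℂ)) * hs2
  · linear_combination ((0 : ℂ)) * hτ9 + ((0 : ℂ)) * hs2
  · linear_combination ((0 : ℂ)) * hτ9 + ((0 : ℂ)) * hs2
  · linear_combination ((-1 : ℂ)) * hτ9 + ((0 : ℂ)) * hs2

lemma hBBI : Bm * BmI = 1 := by
  simp only [Bm, BmI, Matrix.mul_fin_three, Matrix.one_fin_three]
  refine mat3_eq ?_ ?_ ?_ ?_ ?_ ?_ ?_ ?_ ?_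
  · linear_combination ((-1 : ℂ) + (1 : ℂ) * τ^9) * hτ9 + (((1 : ℂ)/4) * τ^18) * hs2
  · linear_combination ((0 : ℂ)) * hτ9 + (((1 : ℂ)/4) * τ^18) * hs2
  · linear_combination ((0 : ℂ)) * hτ9 + ((0 : ℂ)) * hs2
  · linear_combination ((0 : ℂ)) * hτ9 + (((1 : ℂ)/4) * τ^18) * hs2
  · linear_combination ((-1 : ℂ) + (1 : ℂ) * τ^9) * hτ9 + (((1 : ℂ)/4) * τ^18) * hs2
  · linear_combination ((0 : ℂ)) * hτ9 + ((0 : ℂ)) * hs2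
  · linear_combination ((0 : ℂ)) * hτ9 + ((0 : ℂ)) * hs2
  · linear_combination ((0 : ℂ)) * hτ9 + ((0 : ℂ)) * hs2
  · linear_combination ((-1 : ℂ) + (1 : ℂ) * τ^9) * hτ9 + (((1 : ℂ)/2) * τ^18) * hs2

lemma hBIB : BmI * Bm = 1 := by
  simp only [Bm, BmI, Matrix.mul_fin_three, Matrix.one_fin_three]
  refine mat3_eq ?_ ?_ ?_ ?_ ?_ ?_ ?_ ?_ ?_
  · linear_combination ((-1 : ℂ) + (1 : ℂ) * τ^9) * hτ9 + (((1 : ℂ)/4) * τ^18) * hs2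
  · linear_combination ((0 : ℂ)) * hτ9 + (((1 : ℂ)/4) * τ^18) * hs2
  · linear_combination ((0 : ℂ)) * hτ9 + ((0 : ℂ)) * hs2
  · linear_combination ((0 : ℂ)) * hτ9 + (((1 : ℂ)/4) * τ^18) * hs2
  · linear_combination ((-1 : ℂ) + (1 : ℂ) * τ^9) * hτ9 + (((1 : ℂ)/4) * τ^18) * hs2
  · linear_combination ((0 : ℂ)) * hτ9 + ((0 : ℂ)) * hs2
  · linear_combination ((0 : ℂ)) * hτ9 + ((0 : ℂ)) * hs2
  · linear_combination ((0 : ℂ)) * hτ9 + ((0 : ℂ)) * hs2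
  · linear_combination ((-1 : ℂ) + (1 : ℂ) * τ^9) * hτ9 + (((1 : ℂ)/2) * τ^18) * hs2

lemma hQQ : Qm * Qm = 1 := by
  simp only [Qm, Matrix.mul_fin_three, Matrix.one_fin_three]
  refine mat3_eq ?_ ?_ ?_ ?_ ?_ ?_ ?_ ?_ ?_
  · linear_combination ((0 : ℂ)) * hτ9 + (((1 : ℂ)/2)) * hs2
  · linear_combination ((0 : ℂ)) * hτ9 + ((0 : ℂ)) * hs2
  · linear_combination ((0 : ℂ)) * hτ9 + ((0 : ℂ)) * hs2
  · linear_combination ((0 : ℂ)) * hτ9 + ((0 : ℂ)) * hs2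
  · linear_combination ((0 : ℂ)) * hτ9 + (((1 : ℂ)/2)) * hs2
  · linear_combination ((0 : ℂ)) * hτ9 + ((0 : ℂ)) * hs2
  · linear_combination ((0 : ℂ)) * hτ9 + ((0 : ℂ)) * hs2
  · linear_combination ((0 : ℂ)) * hτ9 + ((0 : ℂ)) * hs2
  · linear_combination ((0 : ℂ)) * hτ9 + ((0 : ℂ)) * hs2

lemma hUm : Am * Am = Um := by
  simp only [Am, Um, Matrix.mul_fin_three, Matrix.one_fin_three]
  refine mat3_eq ?_ ?_ ?_ ?_ ?_ ?_ ?_ ?_ ?_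
  · linear_combination ((0 : ℂ)) * hτ9 + ((0 : ℂ)) * hs2
  · linear_combination ((0 : ℂ)) * hτ9 + ((0 : ℂ)) * hs2
  · linear_combination ((0 : ℂ)) * hτ9 + ((0 : ℂ)) * hs2
  · linear_combination ((0 : ℂ)) * hτ9 + ((0 : ℂ)) * hs2
  · linear_combination ((0 : ℂ)) * hτ9 + ((0 : ℂ)) * hs2
  · linear_combination ((0 : ℂ)) * hτ9 + ((0 : ℂ)) * hs2
  · linear_combination ((0 : ℂ)) * hτ9 + ((0 : ℂ)) * hs2
  · linear_combination ((0 : ℂ)) * hτ9 + ((0 : ℂ)) * hs2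
  · linear_combination ((0 : ℂ)) * hτ9 + ((0 : ℂ)) * hs2

lemma hCm : AmI * Bm = Cm := by
  simp only [AmI, Bm, Cm, Matrix.mul_fin_three, Matrix.one_fin_three]
  refine mat3_eq ?_ ?_ ?_ ?_ ?_ ?_ ?_ ?_ ?_
  · linear_combination ((0 : ℂ)) * hτ9 + ((0 : ℂ)) * hs2
  · linear_combination ((0 : ℂ)) * hτ9 + ((0 : ℂ)) * hs2
  · linear_combination (((-1 : ℂ)/2) * sq2) * hτ9 + ((0 : ℂ)) * hs2
  · linear_combination ((0 : ℂ)) * hτ9 + ((0 : ℂ)) * hs2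
  · linear_combination ((0 : ℂ)) * hτ9 + ((0 : ℂ)) * hs2
  · linear_combination (((1 : ℂ)/2) * sq2) * hτ9 + ((0 : ℂ)) * hs2
  · linear_combination (((1 : ℂ)/2) * τ^3 * sq2) * hτ9 + ((0 : ℂ)) * hs2
  · linear_combination (((1 : ℂ)/2) * τ^3 * sq2) * hτ9 + ((0 : ℂ)) * hs2
  · linear_combination ((0 : ℂ)) * hτ9 + ((0 : ℂ)) * hs2

lemma hXm : Am * Bm * Am = Xm := by
  simp only [Am, Bm, Xm, Matrix.mul_fin_three, Matrix.one_fin_three]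
  refine mat3_eq ?_ ?_ ?_ ?_ ?_ ?_ ?_ ?_ ?_
  · linear_combination (((1 : ℂ)/2) + ((-1 : ℂ)/2) * τ^9) * hτ9 + ((0 : ℂ)) * hs2
  · linear_combination (((1 : ℂ)/2) + ((-1 : ℂ)/2) * τ^9) * hτ9 + ((0 : ℂ)) * hs2
  · linear_combination (((1 : ℂ)/2) * sq2 + ((-1 : ℂ)/2) * τ^9 * sq2) * hτ9 + ((0 : ℂ)) * hs2
  · linear_combination (((1 : ℂ)/2) + ((-1 : ℂ)/2) * τ^9) * hτ9 + ((0 : ℂ)) * hs2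
  · linear_combination (((1 : ℂ)/2) + ((-1 : ℂ)/2) * τ^9) * hτ9 + ((0 : ℂ)) * hs2
  · linear_combination (((-1 : ℂ)/2) * sq2 + ((1 : ℂ)/2) * τ^9 * sq2) * hτ9 + ((0 : ℂ)) * hs2
  · linear_combination (((1 : ℂ)/2) * sq2 + ((-1 : ℂ)/2) * τ^9 * sq2) * hτ9 + ((0 : ℂ)) * hs2
  · linear_combination (((-1 : ℂ)/2) * sq2 + ((1 : ℂ)/2) * τ^9 * sq2) * hτ9 + ((0 : ℂ)) * hs2
  · linear_combination ((0 : ℂ)) * hτ9 + ((0 : ℂ)) * hs2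

lemma hKm : Am * Bm * AmI * AmI * BmI * Am = Km := by
  simp only [Am, AmI, Bm, BmI, Km, Matrix.mul_fin_three, Matrix.one_fin_three]
  refine mat3_eq ?_ ?_ ?_ ?_ ?_ ?_ ?_ ?_ ?_
  · linear_combination (((-1 : ℂ)/2) + ((-1 : ℂ)/2) * τ^6 + ((1 : ℂ)/2) * τ^9 + ((1 : ℂ)/2) * τ^15 + ((-1 : ℂ)/2) * τ^18 + ((-1 : ℂ)/2) * τ^24 + ((1 : ℂ)/2) * τ^27 + ((1 : ℂ)/2) * τ^33) * hτ9 + (((1 : ℂ)/4) * τ^42) * hs2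
  · linear_combination (((-1 : ℂ)/2) + ((1 : ℂ)/2) * τ^6 + ((1 : ℂ)/2) * τ^9 + ((-1 : ℂ)/2) * τ^15 + ((-1 : ℂ)/2) * τ^18 + ((1 : ℂ)/2) * τ^24 + ((1 : ℂ)/2) * τ^27 + ((-1 : ℂ)/2) * τ^33) * hτ9 + (((-1 : ℂ)/4) * τ^42) * hs2
  · linear_combination ((0 : ℂ)) * hτ9 + ((0 : ℂ)) * hs2
  · linear_combination (((-1 : ℂ)/2) + ((1 : ℂ)/2) * τ^6 + ((1 : ℂ)/2) * τ^9 + ((-1 : ℂ)/2) * τ^15 + ((-1 : ℂ)/2) * τ^18 + ((1 : ℂ)/2) * τ^24 + ((1 : ℂ)/2) * τ^27 + ((-1 : ℂ)/2) * τ^33) * hτ9 + (((-1 : ℂ)/4) * τ^42) * hs2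
  · linear_combination (((-1 : ℂ)/2) + ((-1 : ℂ)/2) * τ^6 + ((1 : ℂ)/2) * τ^9 + ((1 : ℂ)/2) * τ^15 + ((-1 : ℂ)/2) * τ^18 + ((-1 : ℂ)/2) * τ^24 + ((1 : ℂ)/2) * τ^27 + ((1 : ℂ)/2) * τ^33) * hτ9 + (((1 : ℂ)/4) * τ^42) * hs2
  · linear_combination ((0 : ℂ)) * hτ9 + ((0 : ℂ)) * hs2
  · linear_combination ((0 : ℂ)) * hτ9 + ((0 : ℂ)) * hs2
  · linear_combination ((0 : ℂ)) * hτ9 + ((0 : ℂ)) * hs2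
  · linear_combination ((1 : ℂ) * τ^3 + (-1 : ℂ) * τ^12 + (1 : ℂ) * τ^21) * hτ9 + (((1 : ℂ)/2) * τ^30) * hs2

lemma hU2 : Um * Um = U2m := by
  simp only [U2m, Um, Matrix.mul_fin_three, Matrix.one_fin_three]
  refine mat3_eq ?_ ?_ ?_ ?_ ?_ ?_ ?_ ?_ ?_
  · linear_combination ((1 : ℂ) * τ^1 + (-1 : ℂ) * τ^10 + (1 : ℂ) * τ^19) * hτ9 + ((0 : ℂ)) * hs2
  · linear_combination ((0 : ℂ)) * hτ9 + ((0 : ℂ)) * hs2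
  · linear_combination ((0 : ℂ)) * hτ9 + ((0 : ℂ)) * hs2
  · linear_combination ((0 : ℂ)) * hτ9 + ((0 : ℂ)) * hs2
  · linear_combination ((1 : ℂ) * τ^1 + (-1 : ℂ) * τ^10 + (1 : ℂ) * τ^19) * hτ9 + ((0 : ℂ)) * hs2
  · linear_combination ((0 : ℂ)) * hτ9 + ((0 : ℂ)) * hs2
  · linear_combination ((0 : ℂ)) * hτ9 + ((0 : ℂ)) * hs2
  · linear_combination ((0 : ℂ)) * hτ9 + ((0 : ℂ)) * hs2
  · linear_combination ((1 : ℂ) * τ^7) * hτ9 + ((0 : ℂ)) * hs2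

lemma hU3 : U2m * Um = U3m := by
  simp only [U2m, U3m, Um, Matrix.mul_fin_three, Matrix.one_fin_three]
  refine mat3_eq ?_ ?_ ?_ ?_ ?_ ?_ ?_ ?_ ?_
  · linear_combination ((-1 : ℂ) * τ^6) * hτ9 + ((0 : ℂ)) * hs2
  · linear_combination ((0 : ℂ)) * hτ9 + ((0 : ℂ)) * hs2
  · linear_combination ((0 : ℂ)) * hτ9 + ((0 : ℂ)) * hs2
  · linear_combination ((0 : ℂ)) * hτ9 + ((0 : ℂ)) * hs2
  · linear_combination ((-1 : ℂ) * τ^6) * hτ9 + ((0 : ℂ)) * hs2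
  · linear_combination ((0 : ℂ)) * hτ9 + ((0 : ℂ)) * hs2
  · linear_combination ((0 : ℂ)) * hτ9 + ((0 : ℂ)) * hs2
  · linear_combination ((0 : ℂ)) * hτ9 + ((0 : ℂ)) * hs2
  · linear_combination ((-1 : ℂ) * τ^6) * hτ9 + ((0 : ℂ)) * hs2

lemma hU4 : U3m * Um = U4m := by
  simp only [U3m, U4m, Um, Matrix.mul_fin_three, Matrix.one_fin_three]
  refine mat3_eq ?_ ?_ ?_ ?_ ?_ ?_ ?_ ?_ ?_
  · linear_combination ((-1 : ℂ) * τ^2 + (1 : ℂ) * τ^11) * hτ9 + ((0 : ℂ)) * hs2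
  · linear_combination ((0 : ℂ)) * hτ9 + ((0 : ℂ)) * hs2
  · linear_combination ((0 : ℂ)) * hτ9 + ((0 : ℂ)) * hs2
  · linear_combination ((0 : ℂ)) * hτ9 + ((0 : ℂ)) * hs2
  · linear_combination ((-1 : ℂ) * τ^2 + (1 : ℂ) * τ^11) * hτ9 + ((0 : ℂ)) * hs2
  · linear_combination ((0 : ℂ)) * hτ9 + ((0 : ℂ)) * hs2
  · linear_combination ((0 : ℂ)) * hτ9 + ((0 : ℂ)) * hs2
  · linear_combination ((0 : ℂ)) * hτ9 + ((0 : ℂ)) * hs2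
  · linear_combination ((1 : ℂ) * τ^5) * hτ9 + ((0 : ℂ)) * hs2

lemma hU5 : U4m * Um = U5m := by
  simp only [U4m, U5m, Um, Matrix.mul_fin_three, Matrix.one_fin_three]
  refine mat3_eq ?_ ?_ ?_ ?_ ?_ ?_ ?_ ?_ ?_
  · linear_combination ((1 : ℂ) * τ^7) * hτ9 + ((0 : ℂ)) * hs2
  · linear_combination ((0 : ℂ)) * hτ9 + ((0 : ℂ)) * hs2
  · linear_combination ((0 : ℂ)) * hτ9 + ((0 : ℂ)) * hs2
  · linear_combination ((0 : ℂ)) * hτ9 + ((0 : ℂ)) * hs2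
  · linear_combination ((1 : ℂ) * τ^7) * hτ9 + ((0 : ℂ)) * hs2
  · linear_combination ((0 : ℂ)) * hτ9 + ((0 : ℂ)) * hs2
  · linear_combination ((0 : ℂ)) * hτ9 + ((0 : ℂ)) * hs2
  · linear_combination ((0 : ℂ)) * hτ9 + ((0 : ℂ)) * hs2
  · linear_combination ((-1 : ℂ) * τ^4) * hτ9 + ((0 : ℂ)) * hs2

lemma hU6 : U5m * Um = U6m := by
  simp only [U5m, U6m, Um, Matrix.mul_fin_three, Matrix.one_fin_three]
  refine mat3_eq ?_ ?_ ?_ ?_ ?_ ?_ ?_ ?_ ?_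
  · linear_combination ((1 : ℂ) * τ^3 + (-1 : ℂ) * τ^12) * hτ9 + ((0 : ℂ)) * hs2
  · linear_combination ((0 : ℂ)) * hτ9 + ((0 : ℂ)) * hs2
  · linear_combination ((0 : ℂ)) * hτ9 + ((0 : ℂ)) * hs2
  · linear_combination ((0 : ℂ)) * hτ9 + ((0 : ℂ)) * hs2
  · linear_combination ((1 : ℂ) * τ^3 + (-1 : ℂ) * τ^12) * hτ9 + ((0 : ℂ)) * hs2
  · linear_combination ((0 : ℂ)) * hτ9 + ((0 : ℂ)) * hs2
  · linear_combination ((0 : ℂ)) * hτ9 + ((0 : ℂ)) * hs2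
  · linear_combination ((0 : ℂ)) * hτ9 + ((0 : ℂ)) * hs2
  · linear_combination ((1 : ℂ) * τ^3) * hτ9 + ((0 : ℂ)) * hs2

lemma hU7 : U6m * Um = U7m := by
  simp only [U6m, U7m, Um, Matrix.mul_fin_three, Matrix.one_fin_three]
  refine mat3_eq ?_ ?_ ?_ ?_ ?_ ?_ ?_ ?_ ?_
  · linear_combination ((-1 : ℂ) * τ^8) * hτ9 + ((0 : ℂ)) * hs2
  · linear_combination ((0 : ℂ)) * hτ9 + ((0 : ℂ)) * hs2
  · linear_combination ((0 : ℂ)) * hτ9 + ((0 : ℂ)) * hs2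
  · linear_combination ((0 : ℂ)) * hτ9 + ((0 : ℂ)) * hs2
  · linear_combination ((-1 : ℂ) * τ^8) * hτ9 + ((0 : ℂ)) * hs2
  · linear_combination ((0 : ℂ)) * hτ9 + ((0 : ℂ)) * hs2
  · linear_combination ((0 : ℂ)) * hτ9 + ((0 : ℂ)) * hs2
  · linear_combination ((0 : ℂ)) * hτ9 + ((0 : ℂ)) * hs2
  · linear_combination ((-1 : ℂ) * τ^2) * hτ9 + ((0 : ℂ)) * hs2

lemma hU8 : U7m * Um = U8m := by
  simp only [U7m, U8m, Um, Matrix.mul_fin_three, Matrix.one_fin_three]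
  refine mat3_eq ?_ ?_ ?_ ?_ ?_ ?_ ?_ ?_ ?_
  · linear_combination ((-1 : ℂ) * τ^4 + (1 : ℂ) * τ^13) * hτ9 + ((0 : ℂ)) * hs2
  · linear_combination ((0 : ℂ)) * hτ9 + ((0 : ℂ)) * hs2
  · linear_combination ((0 : ℂ)) * hτ9 + ((0 : ℂ)) * hs2
  · linear_combination ((0 : ℂ)) * hτ9 + ((0 : ℂ)) * hs2
  · linear_combination ((-1 : ℂ) * τ^4 + (1 : ℂ) * τ^13) * hτ9 + ((0 : ℂ)) * hs2
  · linear_combination ((0 : ℂ)) * hτ9 + ((0 : ℂ)) * hs2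
  · linear_combination ((0 : ℂ)) * hτ9 + ((0 : ℂ)) * hs2
  · linear_combination ((0 : ℂ)) * hτ9 + ((0 : ℂ)) * hs2
  · linear_combination ((1 : ℂ) * τ^1) * hτ9 + ((0 : ℂ)) * hs2

lemma hU9 : U8m * Um = 1 := by
  simp only [U8m, Um, Matrix.mul_fin_three, Matrix.one_fin_three]
  refine mat3_eq ?_ ?_ ?_ ?_ ?_ ?_ ?_ ?_ ?_
  · linear_combination ((-1 : ℂ) + (1 : ℂ) * τ^9) * hτ9 + ((0 : ℂ)) * hs2
  · linear_combination ((0 : ℂ)) * hτ9 + ((0 : ℂ)) * hs2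
  · linear_combination ((0 : ℂ)) * hτ9 + ((0 : ℂ)) * hs2
  · linear_combination ((0 : ℂ)) * hτ9 + ((0 : ℂ)) * hs2
  · linear_combination ((-1 : ℂ) + (1 : ℂ) * τ^9) * hτ9 + ((0 : ℂ)) * hs2
  · linear_combination ((0 : ℂ)) * hτ9 + ((0 : ℂ)) * hs2
  · linear_combination ((0 : ℂ)) * hτ9 + ((0 : ℂ)) * hs2
  · linear_combination ((0 : ℂ)) * hτ9 + ((0 : ℂ)) * hs2
  · linear_combination ((-1 : ℂ)) * hτ9 + ((0 : ℂ)) * hs2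

lemma hK2 : Km * Km = K2m := by
  simp only [K2m, Km, Matrix.mul_fin_three, Matrix.one_fin_three]
  refine mat3_eq ?_ ?_ ?_ ?_ ?_ ?_ ?_ ?_ ?_
  · linear_combination (((1 : ℂ)/2) * τ^3) * hτ9 + ((0 : ℂ)) * hs2
  · linear_combination (((-1 : ℂ)/2) * τ^3) * hτ9 + ((0 : ℂ)) * hs2
  · linear_combination ((0 : ℂ)) * hτ9 + ((0 : ℂ)) * hs2
  · linear_combination (((-1 : ℂ)/2) * τ^3) * hτ9 + ((0 : ℂ)) * hs2
  · linear_combination (((1 : ℂ)/2) * τ^3) * hτ9 + ((0 : ℂ)) * hs2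
  · linear_combination ((0 : ℂ)) * hτ9 + ((0 : ℂ)) * hs2
  · linear_combination ((0 : ℂ)) * hτ9 + ((0 : ℂ)) * hs2
  · linear_combination ((0 : ℂ)) * hτ9 + ((0 : ℂ)) * hs2
  · linear_combination ((0 : ℂ)) * hτ9 + ((0 : ℂ)) * hs2

lemma hK3 : K2m * Km = 1 := by
  simp only [K2m, Km, Matrix.mul_fin_three, Matrix.one_fin_three]
  refine mat3_eq ?_ ?_ ?_ ?_ ?_ ?_ ?_ ?_ ?_
  · linear_combination (((-1 : ℂ)/2)) * hτ9 + ((0 : ℂ)) * hs2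
  · linear_combination (((1 : ℂ)/2)) * hτ9 + ((0 : ℂ)) * hs2
  · linear_combination ((0 : ℂ)) * hτ9 + ((0 : ℂ)) * hs2
  · linear_combination (((1 : ℂ)/2)) * hτ9 + ((0 : ℂ)) * hs2
  · linear_combination (((-1 : ℂ)/2)) * hτ9 + ((0 : ℂ)) * hs2
  · linear_combination ((0 : ℂ)) * hτ9 + ((0 : ℂ)) * hs2
  · linear_combination ((0 : ℂ)) * hτ9 + ((0 : ℂ)) * hs2
  · linear_combination ((0 : ℂ)) * hτ9 + ((0 : ℂ)) * hs2
  · linear_combination ((-1 : ℂ)) * hτ9 + ((0 : ℂ)) * hs2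

lemma hC2 : Cm * Cm = C2m := by
  simp only [C2m, Cm, Matrix.mul_fin_three, Matrix.one_fin_three]
  refine mat3_eq ?_ ?_ ?_ ?_ ?_ ?_ ?_ ?_ ?_
  · linear_combination ((0 : ℂ)) * hτ9 + (((-1 : ℂ)/4) * τ^3) * hs2
  · linear_combination ((0 : ℂ)) * hτ9 + (((-1 : ℂ)/4) * τ^3) * hs2
  · linear_combination ((0 : ℂ)) * hτ9 + ((0 : ℂ)) * hs2
  · linear_combination ((0 : ℂ)) * hτ9 + (((1 : ℂ)/4) * τ^3) * hs2
  · linear_combination ((0 : ℂ)) * hτ9 + (((1 : ℂ)/4) * τ^3) * hs2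
  · linear_combination ((0 : ℂ)) * hτ9 + ((0 : ℂ)) * hs2
  · linear_combination (((-1 : ℂ)/2) * sq2) * hτ9 + ((0 : ℂ)) * hs2
  · linear_combination (((1 : ℂ)/2) * sq2) * hτ9 + ((0 : ℂ)) * hs2
  · linear_combination ((0 : ℂ)) * hτ9 + ((0 : ℂ)) * hs2

lemma hC3 : C2m * Cm = 1 := by
  simp only [C2m, Cm, Matrix.mul_fin_three, Matrix.one_fin_three]
  refine mat3_eq ?_ ?_ ?_ ?_ ?_ ?_ ?_ ?_ ?_
  · linear_combination ((-1 : ℂ)) * hτ9 + (((-1 : ℂ)/4) * τ^9) * hs2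
  · linear_combination ((0 : ℂ)) * hτ9 + (((-1 : ℂ)/4) * τ^9) * hs2
  · linear_combination ((0 : ℂ)) * hτ9 + ((0 : ℂ)) * hs2
  · linear_combination ((0 : ℂ)) * hτ9 + (((-1 : ℂ)/4) * τ^9) * hs2
  · linear_combination ((-1 : ℂ)) * hτ9 + (((-1 : ℂ)/4) * τ^9) * hs2
  · linear_combination ((0 : ℂ)) * hτ9 + ((0 : ℂ)) * hs2
  · linear_combination ((0 : ℂ)) * hτ9 + ((0 : ℂ)) * hs2
  · linear_combination ((0 : ℂ)) * hτ9 + ((0 : ℂ)) * hs2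
  · linear_combination ((0 : ℂ)) * hτ9 + (((1 : ℂ)/2)) * hs2

lemma hX2 : Xm * Xm = 1 := by
  simp only [Xm, Matrix.mul_fin_three, Matrix.one_fin_three]
  refine mat3_eq ?_ ?_ ?_ ?_ ?_ ?_ ?_ ?_ ?_
  · linear_combination ((0 : ℂ)) * hτ9 + (((1 : ℂ)/4)) * hs2
  · linear_combination ((0 : ℂ)) * hτ9 + (((-1 : ℂ)/4)) * hs2
  · linear_combination ((0 : ℂ)) * hτ9 + ((0 : ℂ)) * hs2
  · linear_combination ((0 : ℂ)) * hτ9 + (((-1 : ℂ)/4)) * hs2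
  · linear_combination ((0 : ℂ)) * hτ9 + (((1 : ℂ)/4)) * hs2
  · linear_combination ((0 : ℂ)) * hτ9 + ((0 : ℂ)) * hs2
  · linear_combination ((0 : ℂ)) * hτ9 + ((0 : ℂ)) * hs2
  · linear_combination ((0 : ℂ)) * hτ9 + ((0 : ℂ)) * hs2
  · linear_combination ((0 : ℂ)) * hτ9 + (((1 : ℂ)/2)) * hs2

lemma hUK : Um * Km = Km * Um := by
  simp only [Km, Um, Matrix.mul_fin_three, Matrix.one_fin_three]
  refine mat3_eq ?_ ?_ ?_ ?_ ?_ ?_ ?_ ?_ ?_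
  · linear_combination ((0 : ℂ)) * hτ9 + ((0 : ℂ)) * hs2
  · linear_combination ((0 : ℂ)) * hτ9 + ((0 : ℂ)) * hs2
  · linear_combination ((0 : ℂ)) * hτ9 + ((0 : ℂ)) * hs2
  · linear_combination ((0 : ℂ)) * hτ9 + ((0 : ℂ)) * hs2
  · linear_combination ((0 : ℂ)) * hτ9 + ((0 : ℂ)) * hs2
  · linear_combination ((0 : ℂ)) * hτ9 + ((0 : ℂ)) * hs2
  · linear_combination ((0 : ℂ)) * hτ9 + ((0 : ℂ)) * hs2
  · linear_combination ((0 : ℂ)) * hτ9 + ((0 : ℂ)) * hs2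
  · linear_combination ((0 : ℂ)) * hτ9 + ((0 : ℂ)) * hs2

lemma hCU : Cm * Um = Um * (Km * Km) * Cm := by
  simp only [Cm, Km, Um, Matrix.mul_fin_three, Matrix.one_fin_three]
  refine mat3_eq ?_ ?_ ?_ ?_ ?_ ?_ ?_ ?_ ?_
  · linear_combination ((0 : ℂ)) * hτ9 + ((0 : ℂ)) * hs2
  · linear_combination ((0 : ℂ)) * hτ9 + ((0 : ℂ)) * hs2
  · linear_combination (((1 : ℂ)/2) * τ^8 * sq2 + ((-1 : ℂ)/2) * τ^17 * sq2) * hτ9 + ((0 : ℂ)) * hs2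
  · linear_combination ((0 : ℂ)) * hτ9 + ((0 : ℂ)) * hs2
  · linear_combination ((0 : ℂ)) * hτ9 + ((0 : ℂ)) * hs2
  · linear_combination (((-1 : ℂ)/2) * τ^8 * sq2 + ((1 : ℂ)/2) * τ^17 * sq2) * hτ9 + ((0 : ℂ)) * hs2
  · linear_combination ((0 : ℂ)) * hτ9 + ((0 : ℂ)) * hs2
  · linear_combination ((0 : ℂ)) * hτ9 + ((0 : ℂ)) * hs2
  · linear_combination ((0 : ℂ)) * hτ9 + ((0 : ℂ)) * hs2

lemma hCK : Cm * Km = Um * Um * Um * Km * Cm := by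
  simp only [Cm, Km, Um, Matrix.mul_fin_three, Matrix.one_fin_three]
  refine mat3_eq ?_ ?_ ?_ ?_ ?_ ?_ ?_ ?_ ?_
  · linear_combination (((1 : ℂ)/2) * τ^12 + ((-1 : ℂ)/2) * τ^21 + ((1 : ℂ)/2) * τ^30 + ((-1 : ℂ)/2) * τ^39) * hτ9 + ((0 : ℂ)) * hs2
  · linear_combination (((-1 : ℂ)/2) * τ^12 + ((1 : ℂ)/2) * τ^21 + ((-1 : ℂ)/2) * τ^30 + ((1 : ℂ)/2) * τ^39) * hτ9 + ((0 : ℂ)) * hs2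
  · linear_combination (((-1 : ℂ)/2) * τ^3 * sq2 + ((1 : ℂ)/2) * τ^12 * sq2 + ((-1 : ℂ)/2) * τ^21 * sq2 + ((1 : ℂ)/2) * τ^30 * sq2 + ((-1 : ℂ)/2) * τ^39 * sq2) * hτ9 + ((0 : ℂ)) * hs2
  · linear_combination (((1 : ℂ)/2) * τ^12 + ((-1 : ℂ)/2) * τ^21 + ((1 : ℂ)/2) * τ^30 + ((-1 : ℂ)/2) * τ^39) * hτ9 + ((0 : ℂ)) * hs2
  · linear_combination (((-1 : ℂ)/2) * τ^12 + ((1 : ℂ)/2) * τ^21 + ((-1 : ℂ)/2) * τ^30 + ((1 : ℂ)/2) * τ^39) * hτ9 + ((0 : ℂ)) * hs2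
  · linear_combination (((1 : ℂ)/2) * τ^3 * sq2 + ((-1 : ℂ)/2) * τ^12 * sq2 + ((1 : ℂ)/2) * τ^21 * sq2 + ((-1 : ℂ)/2) * τ^30 * sq2 + ((1 : ℂ)/2) * τ^39 * sq2) * hτ9 + ((0 : ℂ)) * hs2
  · linear_combination (((-1 : ℂ)/2) * τ^3 * sq2 + ((1 : ℂ)/2) * τ^12 * sq2 + ((-1 : ℂ)/2) * τ^21 * sq2) * hτ9 + ((0 : ℂ)) * hs2
  · linear_combination (((-1 : ℂ)/2) * τ^3 * sq2 + ((1 : ℂ)/2) * τ^12 * sq2 + ((-1 : ℂ)/2) * τ^21 * sq2) * hτ9 + ((0 : ℂ)) * hs2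
  · linear_combination ((0 : ℂ)) * hτ9 + ((0 : ℂ)) * hs2

lemma hXU : Xm * Um = Um * (Km * Km) * Xm := by
  simp only [Km, Um, Xm, Matrix.mul_fin_three, Matrix.one_fin_three]
  refine mat3_eq ?_ ?_ ?_ ?_ ?_ ?_ ?_ ?_ ?_
  · linear_combination ((0 : ℂ)) * hτ9 + ((0 : ℂ)) * hs2
  · linear_combination ((0 : ℂ)) * hτ9 + ((0 : ℂ)) * hs2
  · linear_combination (((-1 : ℂ)/2) * τ^8 * sq2 + ((1 : ℂ)/2) * τ^17 * sq2) * hτ9 + ((0 : ℂ)) * hs2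
  · linear_combination ((0 : ℂ)) * hτ9 + ((0 : ℂ)) * hs2
  · linear_combination ((0 : ℂ)) * hτ9 + ((0 : ℂ)) * hs2
  · linear_combination (((1 : ℂ)/2) * τ^8 * sq2 + ((-1 : ℂ)/2) * τ^17 * sq2) * hτ9 + ((0 : ℂ)) * hs2
  · linear_combination ((0 : ℂ)) * hτ9 + ((0 : ℂ)) * hs2
  · linear_combination ((0 : ℂ)) * hτ9 + ((0 : ℂ)) * hs2
  · linear_combination ((0 : ℂ)) * hτ9 + ((0 : ℂ)) * hs2

lemma hXK : Xm * Km = Km * Km * Xm := by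
  simp only [Km, Xm, Matrix.mul_fin_three, Matrix.one_fin_three]
  refine mat3_eq ?_ ?_ ?_ ?_ ?_ ?_ ?_ ?_ ?_
  · linear_combination ((0 : ℂ)) * hτ9 + ((0 : ℂ)) * hs2
  · linear_combination ((0 : ℂ)) * hτ9 + ((0 : ℂ)) * hs2
  · linear_combination (((1 : ℂ)/2) * τ^3 * sq2) * hτ9 + ((0 : ℂ)) * hs2
  · linear_combination ((0 : ℂ)) * hτ9 + ((0 : ℂ)) * hs2
  · linear_combination ((0 : ℂ)) * hτ9 + ((0 : ℂ)) * hs2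
  · linear_combination (((-1 : ℂ)/2) * τ^3 * sq2) * hτ9 + ((0 : ℂ)) * hs2
  · linear_combination ((0 : ℂ)) * hτ9 + ((0 : ℂ)) * hs2
  · linear_combination ((0 : ℂ)) * hτ9 + ((0 : ℂ)) * hs2
  · linear_combination ((0 : ℂ)) * hτ9 + ((0 : ℂ)) * hs2

lemma hXC : Xm * Cm = Cm * Cm * Xm := by
  simp only [Cm, Xm, Matrix.mul_fin_three, Matrix.one_fin_three]
  refine mat3_eq ?_ ?_ ?_ ?_ ?_ ?_ ?_ ?_ ?_
  · linear_combination ((0 : ℂ)) * hτ9 + (((1 : ℂ)/4) * τ^6) * hs2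
  · linear_combination ((0 : ℂ)) * hτ9 + (((-1 : ℂ)/4) * τ^6) * hs2
  · linear_combination ((0 : ℂ)) * hτ9 + ((0 : ℂ)) * hs2
  · linear_combination ((0 : ℂ)) * hτ9 + (((1 : ℂ)/4) * τ^6) * hs2
  · linear_combination ((0 : ℂ)) * hτ9 + (((-1 : ℂ)/4) * τ^6) * hs2
  · linear_combination ((0 : ℂ)) * hτ9 + ((0 : ℂ)) * hs2
  · linear_combination ((0 : ℂ)) * hτ9 + ((0 : ℂ)) * hs2
  · linear_combination ((0 : ℂ)) * hτ9 + ((0 : ℂ)) * hs2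
  · linear_combination ((-1 : ℂ)) * hτ9 + (((-1 : ℂ)/2) + ((-1 : ℂ)/2) * τ^9) * hs2

lemma hCX : Cm * Xm = Xm * (Cm * Cm) := by
  simp only [Cm, Xm, Matrix.mul_fin_three, Matrix.one_fin_three]
  refine mat3_eq ?_ ?_ ?_ ?_ ?_ ?_ ?_ ?_ ?_
  · linear_combination (((-1 : ℂ)/2)) * hτ9 + (((-1 : ℂ)/4) + ((-1 : ℂ)/4) * τ^9) * hs2
  · linear_combination (((1 : ℂ)/2)) * hτ9 + (((1 : ℂ)/4) + ((1 : ℂ)/4) * τ^9) * hs2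
  · linear_combination ((0 : ℂ)) * hτ9 + ((0 : ℂ)) * hs2
  · linear_combination (((1 : ℂ)/2)) * hτ9 + (((1 : ℂ)/4) + ((1 : ℂ)/4) * τ^9) * hs2
  · linear_combination (((-1 : ℂ)/2)) * hτ9 + (((-1 : ℂ)/4) + ((-1 : ℂ)/4) * τ^9) * hs2
  · linear_combination ((0 : ℂ)) * hτ9 + ((0 : ℂ)) * hs2
  · linear_combination ((0 : ℂ)) * hτ9 + (((-1 : ℂ)/4) * τ^3 * sq2) * hs2
  · linear_combination ((0 : ℂ)) * hτ9 + (((-1 : ℂ)/4) * τ^3 * sq2) * hs2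
  · linear_combination ((0 : ℂ)) * hτ9 + ((0 : ℂ)) * hs2

lemma hAnf : Am = Um * Um * (Km * Km) * (Xm * Cm) := by
  simp only [Am, Cm, Km, Um, Xm, Matrix.mul_fin_three, Matrix.one_fin_three]
  refine mat3_eq ?_ ?_ ?_ ?_ ?_ ?_ ?_ ?_ ?_
  · linear_combination ((1 : ℂ) * τ^7 + (-1 : ℂ) * τ^16 + (1 : ℂ) * τ^25 + ((-1 : ℂ)/2) * τ^34) * hτ9 + (((-1 : ℂ)/4) * τ^43) * hs2
  · linear_combination (((-1 : ℂ)/2) * τ^34) * hτ9 + (((-1 : ℂ)/4) * τ^43) * hs2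
  · linear_combination ((0 : ℂ)) * hτ9 + ((0 : ℂ)) * hs2
  · linear_combination (((1 : ℂ)/2) * τ^34) * hτ9 + (((1 : ℂ)/4) * τ^43) * hs2
  · linear_combination ((-1 : ℂ) * τ^7 + (1 : ℂ) * τ^16 + (-1 : ℂ) * τ^25 + ((1 : ℂ)/2) * τ^34) * hτ9 + (((1 : ℂ)/4) * τ^43) * hs2
  · linear_combination ((0 : ℂ)) * hτ9 + ((0 : ℂ)) * hs2
  · linear_combination ((0 : ℂ)) * hτ9 + ((0 : ℂ)) * hs2
  · linear_combination ((0 : ℂ)) * hτ9 + ((0 : ℂ)) * hs2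
  · linear_combination ((-1 : ℂ) * τ^4 + (1 : ℂ) * τ^13) * hτ9 + (((1 : ℂ)/2) * τ^22) * hs2

lemma hBnf : Bm = Um * Um * (Km * Km) * (Xm * (Cm * Cm)) := by
  simp only [Bm, Cm, Km, Um, Xm, Matrix.mul_fin_three, Matrix.one_fin_three]
  refine mat3_eq ?_ ?_ ?_ ?_ ?_ ?_ ?_ ?_ ?_
  · linear_combination (((-1 : ℂ)/2) * τ^4 + ((1 : ℂ)/2) * τ^13 + ((-1 : ℂ)/2) * τ^22 + ((1 : ℂ)/2) * τ^31 + ((-1 : ℂ)/2) * τ^40) * hτ9 + (((-1 : ℂ)/4) * τ^49) * hs2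
  · linear_combination (((1 : ℂ)/2) * τ^4 + ((-1 : ℂ)/2) * τ^13 + ((1 : ℂ)/2) * τ^22 + ((-1 : ℂ)/2) * τ^31 + ((1 : ℂ)/2) * τ^40) * hτ9 + (((1 : ℂ)/4) * τ^49) * hs2
  · linear_combination (((1 : ℂ)/2) * τ^7 * sq2 + ((-1 : ℂ)/2) * τ^16 * sq2 + ((1 : ℂ)/2) * τ^25 * sq2) * hτ9 + ((0 : ℂ)) * hs2
  · linear_combination (((1 : ℂ)/2) * τ^4 + ((-1 : ℂ)/2) * τ^13 + ((1 : ℂ)/2) * τ^22 + ((-1 : ℂ)/2) * τ^31 + ((1 : ℂ)/2) * τ^40) * hτ9 + (((1 : ℂ)/4) * τ^49) * hs2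
  · linear_combination (((-1 : ℂ)/2) * τ^4 + ((1 : ℂ)/2) * τ^13 + ((-1 : ℂ)/2) * τ^22 + ((1 : ℂ)/2) * τ^31 + ((-1 : ℂ)/2) * τ^40) * hτ9 + (((-1 : ℂ)/4) * τ^49) * hs2
  · linear_combination (((1 : ℂ)/2) * τ^7 * sq2 + ((-1 : ℂ)/2) * τ^16 * sq2 + ((1 : ℂ)/2) * τ^25 * sq2) * hτ9 + ((0 : ℂ)) * hs2
  · linear_combination (((1 : ℂ)/2) * τ^7 * sq2 + ((-1 : ℂ)/2) * τ^16 * sq2) * hτ9 + (((-1 : ℂ)/4) * τ^25 * sq2) * hs2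
  · linear_combination (((1 : ℂ)/2) * τ^7 * sq2 + ((-1 : ℂ)/2) * τ^16 * sq2) * hτ9 + (((-1 : ℂ)/4) * τ^25 * sq2) * hs2
  · linear_combination ((0 : ℂ)) * hτ9 + ((0 : ℂ)) * hs2

lemma hQU : Qm * Um = Um * Qm := by
  simp only [Qm, Um, Matrix.mul_fin_three, Matrix.one_fin_three]
  refine mat3_eq ?_ ?_ ?_ ?_ ?_ ?_ ?_ ?_ ?_
  · linear_combination ((0 : ℂ)) * hτ9 + ((0 : ℂ)) * hs2
  · linear_combination ((0 : ℂ)) * hτ9 + ((0 : ℂ)) * hs2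
  · linear_combination ((0 : ℂ)) * hτ9 + ((0 : ℂ)) * hs2
  · linear_combination ((0 : ℂ)) * hτ9 + ((0 : ℂ)) * hs2
  · linear_combination ((0 : ℂ)) * hτ9 + ((0 : ℂ)) * hs2
  · linear_combination ((0 : ℂ)) * hτ9 + ((0 : ℂ)) * hs2
  · linear_combination ((0 : ℂ)) * hτ9 + ((0 : ℂ)) * hs2
  · linear_combination ((0 : ℂ)) * hτ9 + ((0 : ℂ)) * hs2
  · linear_combination ((0 : ℂ)) * hτ9 + ((0 : ℂ)) * hs2

lemma hQK : Qm * Km * Qm = Kdm := by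
  simp only [Kdm, Km, Qm, Matrix.mul_fin_three, Matrix.one_fin_three]
  refine mat3_eq ?_ ?_ ?_ ?_ ?_ ?_ ?_ ?_ ?_
  · linear_combination ((0 : ℂ)) * hτ9 + (((1 : ℂ)/2)) * hs2
  · linear_combination ((0 : ℂ)) * hτ9 + ((0 : ℂ)) * hs2
  · linear_combination ((0 : ℂ)) * hτ9 + ((0 : ℂ)) * hs2
  · linear_combination ((0 : ℂ)) * hτ9 + ((0 : ℂ)) * hs2
  · linear_combination ((0 : ℂ)) * hτ9 + (((1 : ℂ)/2) * τ^6) * hs2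
  · linear_combination ((0 : ℂ)) * hτ9 + ((0 : ℂ)) * hs2
  · linear_combination ((0 : ℂ)) * hτ9 + ((0 : ℂ)) * hs2
  · linear_combination ((0 : ℂ)) * hτ9 + ((0 : ℂ)) * hs2
  · linear_combination ((-1 : ℂ) * τ^3) * hτ9 + ((0 : ℂ)) * hs2

lemma hQC : Qm * Cm * Qm = Cqm := by
  simp only [Cm, Cqm, Qm, Matrix.mul_fin_three, Matrix.one_fin_three]
  refine mat3_eq ?_ ?_ ?_ ?_ ?_ ?_ ?_ ?_ ?_
  · linear_combination ((0 : ℂ)) * hτ9 + ((0 : ℂ)) * hs2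
  · linear_combination ((0 : ℂ)) * hτ9 + (((1 : ℂ)/2) * τ^6) * hs2
  · linear_combination ((0 : ℂ)) * hτ9 + ((0 : ℂ)) * hs2
  · linear_combination ((0 : ℂ)) * hτ9 + ((0 : ℂ)) * hs2
  · linear_combination ((0 : ℂ)) * hτ9 + ((0 : ℂ)) * hs2
  · linear_combination ((0 : ℂ)) * hτ9 + (((1 : ℂ)/2)) * hs2
  · linear_combination ((0 : ℂ)) * hτ9 + (((-1 : ℂ)/2) * τ^3) * hs2
  · linear_combination ((0 : ℂ)) * hτ9 + ((0 : ℂ)) * hs2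
  · linear_combination ((0 : ℂ)) * hτ9 + ((0 : ℂ)) * hs2

lemma hQX : Qm * Xm * Qm = Xqm := by
  simp only [Qm, Xm, Xqm, Matrix.mul_fin_three, Matrix.one_fin_three]
  refine mat3_eq ?_ ?_ ?_ ?_ ?_ ?_ ?_ ?_ ?_
  · linear_combination ((0 : ℂ)) * hτ9 + (((-1 : ℂ)/2)) * hs2
  · linear_combination ((0 : ℂ)) * hτ9 + ((0 : ℂ)) * hs2
  · linear_combination ((0 : ℂ)) * hτ9 + ((0 : ℂ)) * hs2
  · linear_combination ((0 : ℂ)) * hτ9 + ((0 : ℂ)) * hs2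
  · linear_combination ((0 : ℂ)) * hτ9 + ((0 : ℂ)) * hs2
  · linear_combination ((0 : ℂ)) * hτ9 + (((-1 : ℂ)/2)) * hs2
  · linear_combination ((0 : ℂ)) * hτ9 + ((0 : ℂ)) * hs2
  · linear_combination ((0 : ℂ)) * hτ9 + (((-1 : ℂ)/2)) * hs2
  · linear_combination ((0 : ℂ)) * hτ9 + ((0 : ℂ)) * hs2

lemma hCq2 : Cqm * Cqm = Cq2m := by
  simp only [Cq2m, Cqm, Matrix.mul_fin_three, Matrix.one_fin_three]
  refine mat3_eq ?_ ?_ ?_ ?_ ?_ ?_ ?_ ?_ ?_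
  · linear_combination ((0 : ℂ)) * hτ9 + ((0 : ℂ)) * hs2
  · linear_combination ((0 : ℂ)) * hτ9 + ((0 : ℂ)) * hs2
  · linear_combination ((0 : ℂ)) * hτ9 + ((0 : ℂ)) * hs2
  · linear_combination ((0 : ℂ)) * hτ9 + ((0 : ℂ)) * hs2
  · linear_combination ((0 : ℂ)) * hτ9 + ((0 : ℂ)) * hs2
  · linear_combination ((0 : ℂ)) * hτ9 + ((0 : ℂ)) * hs2
  · linear_combination ((0 : ℂ)) * hτ9 + ((0 : ℂ)) * hs2
  · linear_combination ((-1 : ℂ)) * hτ9 + ((0 : ℂ)) * hs2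
  · linear_combination ((0 : ℂ)) * hτ9 + ((0 : ℂ)) * hs2

-- ===== GL level =====
def gA : GL3 := ⟨Am, AmI, hAAI, hAIA⟩
def gB : GL3 := ⟨Bm, BmI, hBBI, hBIB⟩
def gQ : GL3 := ⟨Qm, Qm, hQQ, hQQ⟩
def gU : GL3 := gA * gA
def gC : GL3 := gA⁻¹ * gB
def gX : GL3 := gA * gB * gA
def gK : GL3 := gA * gB * gA⁻¹ * gA⁻¹ * gB⁻¹ * gA

lemma cA : (↑gA : M3) = Am := rfl
lemma cB : (↑gB : M3) = Bm := rfl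
lemma cU : (↑gU : M3) = Um := hUm
lemma cC : (↑gC : M3) = Cm := hCm
lemma cX : (↑gX : M3) = Xm := hXm
lemma cK : (↑gK : M3) = Km := hKm
lemma cQ : (↑gQ : M3) = Qm := rfl

lemma glext {u v : GL3} (h : (↑u : M3) = ↑v) : u = v := Units.ext h

lemma LUK : gU * gK = gK * gU := glext (by
  show (↑gU : M3) * (↑gK : M3) = (↑gK : M3) * (↑gU : M3)
  rw [cU, cK]; exact hUK)
lemma LU9 : gU ^ 9 = 1 := glext (by
  show (↑gU : M3) ^ 9 = 1
  rw [cU]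
  norm_num [pow_succ, hU2, hU3, hU4, hU5, hU6, hU7, hU8, hU9])
lemma LK3 : gK ^ 3 = 1 := glext (by
  show (↑gK : M3) ^ 3 = 1
  rw [cK]; norm_num [pow_succ, hK2, hK3])
lemma LC3 : gC ^ 3 = 1 := glext (by
  show (↑gC : M3) ^ 3 = 1
  rw [cC]; norm_num [pow_succ, hC2, hC3])
lemma LX2 : gX * gX = 1 := glext (by
  show (↑gX : M3) * (↑gX : M3) = 1
  rw [cX]; exact hX2)
lemma LCU : gC * gU = gU * (gK * gK) * gC := glext (by
  show (↑gC : M3) * (↑gU : M3) = (↑gU : M3) * ((↑gK : M3) * (↑gK : M3)) * (↑gC : M3)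
  rw [cC, cU, cK]; exact hCU)
lemma LCK : gC * gK = gU * gU * gU * gK * gC := glext (by
  show (↑gC : M3) * (↑gK : M3) = (↑gU : M3) * (↑gU : M3) * (↑gU : M3) * (↑gK : M3) * (↑gC : M3)
  rw [cC, cU, cK]; exact hCK)
lemma LXU : gX * gU = gU * (gK * gK) * gX := glext (by
  show (↑gX : M3) * (↑gU : M3) = (↑gU : M3) * ((↑gK : M3) * (↑gK : M3)) * (↑gX : M3)
  rw [cX, cU, cK]; exact hXU)
lemma LXK : gX * gK = gK * gK * gX := glext (by
  show (↑gX : M3) * (↑gK : M3) = (↑gK : M3) * (↑gK : M3) * (↑gX : M3)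
  rw [cX, cK]; exact hXK)
lemma LXC : gX * gC = gC * gC * gX := glext (by
  show (↑gX : M3) * (↑gC : M3) = (↑gC : M3) * (↑gC : M3) * (↑gX : M3)
  rw [cX, cC]; exact hXC)
lemma LCX : gC * gX = gX * (gC * gC) := glext (by
  show (↑gC : M3) * (↑gX : M3) = (↑gX : M3) * ((↑gC : M3) * (↑gC : M3))
  rw [cX, cC]; exact hCX)
lemma LA : gA = gU * gU * (gK * gK) * (gX * gC) := glext (by
  show (↑gA : M3) = (↑gU : M3) * (↑gU : M3) * ((↑gK : M3) * (↑gK : M3)) * ((↑gX : M3) * (↑gC : M3))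
  rw [cA, cU, cK, cX, cC]; exact hAnf)
lemma LB : gB = gU * gU * (gK * gK) * (gX * (gC * gC)) := glext (by
  show (↑gB : M3) = (↑gU : M3) * (↑gU : M3) * ((↑gK : M3) * (↑gK : M3)) * ((↑gX : M3) * ((↑gC : M3) * (↑gC : M3)))
  rw [cB, cU, cK, cX, cC]; exact hBnf)

-- ===== scalar / bridging lemmas =====
lemma hs0 : sq2 ≠ 0 := by
  rw [sq2]
  exact_mod_cast Complex.ofReal_ne_zero.mpr (Real.sqrt_ne_zero'.mpr (by norm_num))

lemma h18 : τ ^ 18 = 1 := by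
  rw [show (18:ℕ) = 9*2 from rfl, pow_mul, hτ9]; norm_num

lemma hτpow (p : ℕ) : τ ^ p = 1 ↔ (18:ℕ) ∣ p := by
  constructor
  · intro hp
    rw [τ, ← Complex.exp_nat_mul, Complex.exp_eq_one_iff] at hp
    obtain ⟨k, hk⟩ := hp
    have hne : (Real.pi : ℂ) * Complex.I ≠ 0 :=
      mul_ne_zero (Complex.ofReal_ne_zero.mpr Real.pi_ne_zero) Complex.I_ne_zero
    have h2 : (p : ℂ) * ((Real.pi : ℂ) * Complex.I) = ((-18 * k : ℤ) : ℂ) * ((Real.pi : ℂ) * Complex.I) := by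
      push_cast
      linear_combination (-9 : ℂ) * hk
    have h3 : (p : ℂ) = ((-18 * k : ℤ) : ℂ) := mul_right_cancel₀ hne h2
    have h4 : (p : ℤ) = -18 * k := by exact_mod_cast h3
    have h5 : (18 : ℤ) ∣ (p : ℤ) := ⟨-k, by omega⟩
    exact_mod_cast h5
  · rintro ⟨m, rfl⟩
    rw [pow_mul, h18, one_pow]

lemma diag3 (x y z : ℂ) : Matrix.diagonal ![x,y,z] = !![x,0,0;0,y,0;0,0,z] := by
  ext i j
  fin_cases i <;> fin_cases j <;> rfl

lemma smul3 (c a11 a12 a13 a21 a22 a23 a31 a32 a33 : ℂ) :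
    c • !![a11,a12,a13;a21,a22,a23;a31,a32,a33] =
      !![c*a11,c*a12,c*a13;c*a21,c*a22,c*a23;c*a31,c*a32,c*a33] := by
  ext i j
  fin_cases i <;> fin_cases j <;> simp [Matrix.smul_apply]

lemma hinv2 : ((Real.sqrt 2 : ℝ) : ℂ)⁻¹ = sq2 / 2 := by
  show sq2⁻¹ = sq2 / 2
  rw [eq_div_iff (two_ne_zero), inv_mul_eq_iff_eq_mul₀ hs0]
  linear_combination -hs2

lemma hma : ma = Am := by
  rw [show ma = τ • Matrix.diagonal ![ω^2, -ω^2, ω] from rfl, hω, diag3, smul3, Am]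
  refine mat3_eq ?_ ?_ ?_ ?_ ?_ ?_ ?_ ?_ ?_
  · linear_combination (τ^16 - τ^7) * hτ9
  · ring
  · ring
  · ring
  · linear_combination (τ^7 - τ^16) * hτ9
  · ring
  · ring
  · ring
  · linear_combination (τ^4) * hτ9

lemma hmb : mb = Bm := by
  rw [show mb = τ • !![ω / 2, -ω / 2, ω ^ 2 / (Real.sqrt 2 : ℂ);
         -ω / 2, ω / 2, ω ^ 2 / (Real.sqrt 2 : ℂ);
         ω ^ 2 / (Real.sqrt 2 : ℂ), ω ^ 2 / (Real.sqrt 2 : ℂ), 0] from rfl, hω]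
  simp only [div_eq_mul_inv, hinv2]
  rw [smul3, Bm]
  refine mat3_eq ?_ ?_ ?_ ?_ ?_ ?_ ?_ ?_ ?_
  · linear_combination ((1:ℂ)/2 * τ^4) * hτ9
  · linear_combination (-(1:ℂ)/2 * τ^4) * hτ9
  · linear_combination ((τ^16 - τ^7) * sq2/2) * hτ9
  · linear_combination (-(1:ℂ)/2 * τ^4) * hτ9
  · linear_combination ((1:ℂ)/2 * τ^4) * hτ9
  · linear_combination ((τ^16 - τ^7) * sq2/2) * hτ9
  · linear_combination ((τ^16 - τ^7) * sq2/2) * hτ9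
  · linear_combination ((τ^16 - τ^7) * sq2/2) * hτ9
  · ring

lemma Upow (p : ℕ) : Um ^ p = !![(τ^14)^p, 0, 0; 0, (τ^14)^p, 0; 0, 0, (τ^8)^p] := by
  induction p with
  | zero => simp [Matrix.one_fin_three]
  | succ p ih =>
      rw [pow_succ, ih]
      simp only [Um, Matrix.mul_fin_three]
      refine mat3_eq ?_ ?_ ?_ ?_ ?_ ?_ ?_ ?_ ?_ <;> ring

lemma Kdpow (p : ℕ) : Kdm ^ p = !![1, 0, 0; 0, (τ^6)^p, 0; 0, 0, (τ^12)^p] := by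
  induction p with
  | zero => simp [Matrix.one_fin_three]
  | succ p ih =>
      rw [pow_succ, ih]
      simp only [Kdm, Matrix.mul_fin_three]
      refine mat3_eq ?_ ?_ ?_ ?_ ?_ ?_ ?_ ?_ ?_ <;> ring

-- ===== abstract action data =====
def ρf : ZMod 9 × ZMod 3 → ZMod 9 × ZMod 3 :=
  fun n => (n.1 + 3 * (n.2.val : ZMod 9), 2 * (n.1.val : ZMod 3) + n.2)
def σf : ZMod 9 × ZMod 3 → ZMod 9 × ZMod 3 :=
  fun n => (n.1, 2 * (n.1.val : ZMod 3) + 2 * n.2)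
def act : DihedralGroup 3 → ZMod 9 × ZMod 3 → ZMod 9 × ZMod 3
  | DihedralGroup.r l => fun n => ρf^[l.val] n
  | DihedralGroup.sr l => fun n => σf (ρf^[l.val] n)
def AA : ZMod 9 × ZMod 3 → GL3 := fun n => gU ^ n.1.val * gK ^ n.2.val
def MM : DihedralGroup 3 → GL3
  | DihedralGroup.r l => gC ^ l.val
  | DihedralGroup.sr l => gX * gC ^ l.val
def ff : (ZMod 9 × ZMod 3) × DihedralGroup 3 → GL3 := fun p => AA p.1 * MM p.2

lemma dd1 : ∀ (i : ZMod 9) (j : ZMod 3), (ρf (i,j)).1.val = (i.val + 3*j.val) % 9 := by decide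
lemma dd2 : ∀ (i : ZMod 9) (j : ZMod 3), (ρf (i,j)).2.val = (2*i.val + j.val) % 3 := by decide
lemma dd3 : ∀ (i : ZMod 9) (j : ZMod 3), (σf (i,j)).2.val = (2*i.val + 2*j.val) % 3 := by decide
lemma dd4 : ∀ l l' : ZMod 3, (l' - l).val = (2*l.val + l'.val) % 3 := by decide
lemma dact : ∀ (h : DihedralGroup 3) (n : ZMod 9 × ZMod 3), act h (act h⁻¹ n) = n := by decide

lemma pow_mod_eq {G : Type*} [Monoid G] {g : G} {m : ℕ} (hg : g ^ m = 1) (c : ℕ) :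
    g ^ (c % m) = g ^ c := by
  conv_rhs => rw [← Nat.div_add_mod c m]
  rw [pow_add, pow_mul, hg, one_pow, one_mul]

lemma cUK : Commute gU gK := LUK
lemma sCU : SemiconjBy gC gU (gU * gK^2) := by rw [pow_two]; exact LCU
lemma sCK : SemiconjBy gC gK (gU^3 * gK) := by
  have : gU^3 = gU * gU * gU := by rw [pow_succ, pow_two]
  rw [this]; exact LCK
lemma sXU : SemiconjBy gX gU (gU * gK^2) := by rw [pow_two]; exact LXU
lemma sXK : SemiconjBy gX gK (gK^2) := by rw [pow_two]; exact LXK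

lemma keyC (p q : ℕ) : gC * (gU^p * gK^q) = gU^(p+3*q) * gK^(2*p+q) * gC := by
  have e1 : gC * (gU^p * gK^q) = (gU*gK^2)^p * ((gU^3*gK)^q * gC) := by
    rw [← mul_assoc, (sCU.pow_right p).eq, mul_assoc, (sCK.pow_right q).eq, ← mul_assoc]
  have e2 : (gU*gK^2)^p = gU^p * gK^(2*p) := by
    rw [(cUK.pow_right 2).mul_pow, ← pow_mul, mul_comm 2 p]
  have e3 : (gU^3*gK)^q = gU^(3*q) * gK^q := by
    rw [(cUK.pow_left 3).mul_pow, ← pow_mul]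
  rw [e1, e2, e3]
  have c1 : gK^(2*p) * gU^(3*q) = gU^(3*q) * gK^(2*p) := (cUK.symm.pow_pow _ _).eq
  calc gU^p * gK^(2*p) * (gU^(3*q) * gK^q * gC)
      = gU^p * (gK^(2*p) * gU^(3*q)) * gK^q * gC := by
        simp only [mul_assoc]
    _ = gU^p * (gU^(3*q) * gK^(2*p)) * gK^q * gC := by rw [c1]
    _ = gU^(p+3*q) * gK^(2*p+q) * gC := by
        rw [pow_add, pow_add]
        simp only [mul_assoc]

lemma keyX (p q : ℕ) : gX * (gU^p * gK^q) = gU^p * gK^(2*p+2*q) * gX := by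
  have e1 : gX * (gU^p * gK^q) = (gU*gK^2)^p * ((gK^2)^q * gX) := by
    rw [← mul_assoc, (sXU.pow_right p).eq, mul_assoc, (sXK.pow_right q).eq, ← mul_assoc]
  have e2 : (gU*gK^2)^p = gU^p * gK^(2*p) := by
    rw [(cUK.pow_right 2).mul_pow, ← pow_mul, mul_comm 2 p]
  rw [e1, e2, ← pow_mul, pow_add]
  simp only [mul_assoc]

lemma AAadd (m n : ZMod 9 × ZMod 3) : AA (m + n) = AA m * AA n := by
  show gU ^ (m.1+n.1).val * gK ^ (m.2+n.2).val = gU ^ m.1.val * gK ^ m.2.val * (gU ^ n.1.val * gK ^ n.2.val)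
  rw [ZMod.val_add, ZMod.val_add, pow_mod_eq LU9, pow_mod_eq LK3, pow_add, pow_add]
  have c1 : gK^(m.2.val) * gU^(n.1.val) = gU^(n.1.val) * gK^(m.2.val) := (cUK.symm.pow_pow _ _).eq
  calc gU^m.1.val * gU^n.1.val * (gK^m.2.val * gK^n.2.val)
      = gU^m.1.val * (gU^n.1.val * gK^m.2.val) * gK^n.2.val := by simp only [mul_assoc]
    _ = gU^m.1.val * (gK^m.2.val * gU^n.1.val) * gK^n.2.val := by rw [c1]
    _ = gU^m.1.val * gK^m.2.val * (gU^n.1.val * gK^n.2.val) := by simp only [mul_assoc]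

lemma CAn (n : ZMod 9 × ZMod 3) : gC * AA n = AA (ρf n) * gC := by
  obtain ⟨i, j⟩ := n
  show gC * (gU ^ i.val * gK ^ j.val) = gU ^ (ρf (i,j)).1.val * gK ^ (ρf (i,j)).2.val * gC
  rw [dd1, dd2, pow_mod_eq LU9, pow_mod_eq LK3, keyC]

lemma XAn (n : ZMod 9 × ZMod 3) : gX * AA n = AA (σf n) * gX := by
  obtain ⟨i, j⟩ := n
  show gX * (gU ^ i.val * gK ^ j.val) = gU ^ (σf (i,j)).1.val * gK ^ (σf (i,j)).2.val * gX
  have e1 : (σf (i,j)).1.val = i.val := rfl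
  rw [e1, dd3, pow_mod_eq LK3, keyX]

lemma CpA (m : ℕ) (n : ZMod 9 × ZMod 3) : gC^m * AA n = AA (ρf^[m] n) * gC^m := by
  induction m generalizing n with
  | zero => simp
  | succ m ih =>
      rw [pow_succ, mul_assoc, CAn, ← mul_assoc, ih, Function.iterate_succ_apply,
        mul_assoc]

lemma MA (h : DihedralGroup 3) (n : ZMod 9 × ZMod 3) : MM h * AA n = AA (act h n) * MM h := by
  cases h with
  | r l => exact CpA l.val n
  | sr l =>
      show gX * gC^l.val * AA n = AA (σf (ρf^[l.val] n)) * (gX * gC^l.val)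
      rw [mul_assoc, CpA, ← mul_assoc, XAn, mul_assoc]

lemma CpX (m : ℕ) : gC^m * gX = gX * gC^(2*m) := by
  induction m with
  | zero => simp
  | succ m ih =>
      have : gC^(m+1) * gX = gC^m * (gX * (gC * gC)) := by
        rw [pow_succ, mul_assoc, LCX]
      rw [this, ← mul_assoc, ih, show gC * gC = gC^2 from (pow_two gC).symm,
        mul_assoc, ← pow_add, show 2*m+2 = 2*(m+1) from by ring]

lemma MMmul (h h' : DihedralGroup 3) : MM h * MM h' = MM (h * h') := by
  cases h with
  | r l => cases h' with
    | r l' =>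
        show gC^l.val * gC^l'.val = gC^(l+l').val
        rw [ZMod.val_add, pow_mod_eq LC3, pow_add]
    | sr l' =>
        show gC^l.val * (gX * gC^l'.val) = gX * gC^(l'-l).val
        rw [← mul_assoc, CpX, dd4, pow_mod_eq LC3, mul_assoc, ← pow_add]
  | sr l => cases h' with
    | r l' =>
        show gX * gC^l.val * gC^l'.val = gX * gC^(l+l').val
        rw [ZMod.val_add, pow_mod_eq LC3, mul_assoc, ← pow_add]
    | sr l' =>
        show gX * gC^l.val * (gX * gC^l'.val) = gC^(l'-l).val
        rw [mul_assoc, ← mul_assoc (gC^l.val), CpX, dd4, pow_mod_eq LC3]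
        rw [← mul_assoc, ← mul_assoc, LX2, one_mul, ← pow_add]

lemma ffmul (p q : (ZMod 9 × ZMod 3) × DihedralGroup 3) :
    ff p * ff q = ff (p.1 + act p.2 q.1, p.2 * q.2) := by
  show AA p.1 * MM p.2 * (AA q.1 * MM q.2) = AA (p.1 + act p.2 q.1) * MM (p.2 * q.2)
  rw [AAadd, ← MMmul]
  calc AA p.1 * MM p.2 * (AA q.1 * MM q.2)
      = AA p.1 * (MM p.2 * AA q.1) * MM q.2 := by simp only [mul_assoc]
    _ = AA p.1 * (AA (act p.2 q.1) * MM p.2) * MM q.2 := by rw [MA]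
    _ = AA p.1 * AA (act p.2 q.1) * (MM p.2 * MM q.2) := by simp only [mul_assoc]

lemma ff_one : ff (0, 1) = 1 := by
  show AA (0, 0) * MM (DihedralGroup.r 0) = 1
  show gU ^ (0 : ZMod 9).val * gK ^ (0 : ZMod 3).val * gC ^ (0 : ZMod 3).val = 1
  simp [ZMod.val_zero]

def SG : Subgroup GL3 where
  carrier := Set.range ff
  one_mem' := ⟨(0, 1), ff_one⟩
  mul_mem' := by
    rintro x y ⟨p, rfl⟩ ⟨q, rfl⟩
    exact ⟨(p.1 + act p.2 q.1, p.2 * q.2), (ffmul p q).symm⟩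
  inv_mem' := by
    rintro x ⟨⟨n, h⟩, rfl⟩
    refine ⟨(act h⁻¹ (-n), h⁻¹), ?_⟩
    have h1 : ff (n, h) * ff (act h⁻¹ (-n), h⁻¹) = 1 := by
      rw [ffmul]
      show ff (n + act h (act h⁻¹ (-n)), h * h⁻¹) = 1
      rw [dact, mul_inv_cancel, add_neg_cancel]
      exact ff_one
    exact (inv_eq_of_mul_eq_one_right h1).symm

-- ===== conjugation by Q, kernel lemma =====
lemma LQQ : gQ * gQ = 1 := glext (show (Qm * Qm : M3) = 1 from hQQ)

lemma conjsplit (M N : M3) : Qm * (M * N) * Qm = (Qm * M * Qm) * (Qm * N * Qm) := by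
  have h : (Qm * M * Qm) * (Qm * N * Qm) = Qm * M * (Qm * Qm) * (N * Qm) := by noncomm_ring
  rw [h, hQQ, mul_one]
  noncomm_ring

lemma conjpow (M : M3) (p : ℕ) : Qm * M ^ p * Qm = (Qm * M * Qm) ^ p := by
  induction p with
  | zero => simpa using hQQ
  | succ p ih => rw [pow_succ, conjsplit, ih, pow_succ]

lemma cQU : Qm * Um * Qm = Um := by rw [hQU, mul_assoc, hQQ, mul_one]

lemma vAA (n : ZMod 9 × ZMod 3) : ((AA n : GL3) : M3) = Um ^ n.1.val * Km ^ n.2.val := by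
  show ((gU ^ n.1.val * gK ^ n.2.val : GL3) : M3) = _
  rw [Units.val_mul, Units.val_pow_eq_pow_val, Units.val_pow_eq_pow_val, cU, cK]

lemma K0 (n : ZMod 9 × ZMod 3) (h : DihedralGroup 3) (hf : ff (n, h) = 1) :
    n = 0 ∧ h = 1 := by
  obtain ⟨i, j⟩ := n
  have hv : (↑(ff ((i, j), h)) : M3) = 1 := by rw [hf]; rfl
  -- the diagonal part, conjugated by Q
  have hdiag : ∀ p q : ℕ, Qm * (Um ^ p * Km ^ q) * Qm = Um ^ p * Kdm ^ q := by
    intro p q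
    rw [conjsplit, conjpow, conjpow, cQU, hQK]
  -- helper to finish the diagonal case
  have hdone : ∀ p q : ℕ, Um ^ p * Kdm ^ q = 1 → p % 9 = 0 ∧ (18:ℕ) ∣ 12 * q := by
    intro p q hE
    rw [Upow, Kdpow, Matrix.mul_fin_three] at hE
    have h00 := congrArg (fun E : M3 => E 0 0) hE
    have h22 := congrArg (fun E : M3 => E 2 2) hE
    simp at h00 h22
    have h00' : τ ^ (14 * p) = 1 := by rw [pow_mul]; linear_combination h00
    have hdvd1 : (18:ℕ) ∣ 14 * p := (hτpow _).mp h00'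
    have hp : p % 9 = 0 := by omega
    have h22' : τ ^ (8 * p) * τ ^ (12 * q) = 1 := by
      rw [pow_mul, pow_mul]; linear_combination h22
    have h8p : τ ^ (8 * p) = 1 := (hτpow _).mpr (by omega)
    rw [h8p, one_mul] at h22'
    exact ⟨hp, (hτpow _).mp h22'⟩
  cases h with
  | r l =>
      have hAv : (↑(ff ((i,j), DihedralGroup.r l)) : M3)
          = Um ^ i.val * Km ^ j.val * Cm ^ l.val := by
        show ((AA (i,j) * (gC ^ l.val) : GL3) : M3) = _
        rw [Units.val_mul, vAA, Units.val_pow_eq_pow_val, cC]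
      rw [hAv] at hv
      have hE : Um ^ i.val * Kdm ^ j.val * Cqm ^ l.val = 1 := by
        have := congrArg (fun M : M3 => Qm * M * Qm) hv
        rw [conjsplit, hdiag, conjpow, hQC, mul_one, hQQ] at this
        exact this
      have hl3 : l.val < 3 := ZMod.val_lt l
      have hcases : l.val = 0 ∨ l.val = 1 ∨ l.val = 2 := by omega
      rcases hcases with h0 | h1 | h2
      · rw [h0, pow_zero, mul_one] at hE
        obtain ⟨hp, hq⟩ := hdone _ _ hE
        have hi : i.val < 9 := ZMod.val_lt i
        have hj : j.val < 3 := ZMod.val_lt j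
        have hi0 : i.val = 0 := by omega
        have hj0 : j.val = 0 := by omega
        refine ⟨?_, ?_⟩
        · have e1 : i = 0 := (ZMod.val_eq_zero i).mp hi0
          have e2 : j = 0 := (ZMod.val_eq_zero j).mp hj0
          simp [e1, e2, Prod.ext_iff]
        · have e3 : l = 0 := (ZMod.val_eq_zero l).mp h0
          rw [e3]; rfl
      · exfalso
        rw [h1, pow_one, Upow, Kdpow] at hE
        simp only [Cqm, Matrix.mul_fin_three] at hE
        have h00 := congrArg (fun E : M3 => E 0 0) hE
        simp at h00
      · exfalso
        rw [h2, show Cqm ^ 2 = Cq2m by rw [pow_two, hCq2], Upow, Kdpow] at hE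
        simp only [Cq2m, Matrix.mul_fin_three] at hE
        have h00 := congrArg (fun E : M3 => E 0 0) hE
        simp at h00
  | sr l =>
      exfalso
      have hAv : (↑(ff ((i,j), DihedralGroup.sr l)) : M3)
          = Um ^ i.val * Km ^ j.val * (Xm * Cm ^ l.val) := by
        show ((AA (i,j) * (gX * gC ^ l.val) : GL3) : M3) = _
        rw [Units.val_mul, vAA, Units.val_mul, Units.val_pow_eq_pow_val, cC, cX]
      rw [hAv] at hv
      have hE : Um ^ i.val * Kdm ^ j.val * (Xqm * Cqm ^ l.val) = 1 := by
        have := congrArg (fun M : M3 => Qm * M * Qm) hv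
        rw [conjsplit, hdiag, conjsplit, conjpow, hQC, hQX, mul_one, hQQ] at this
        exact this
      have hl3 : l.val < 3 := ZMod.val_lt l
      have hcases : l.val = 0 ∨ l.val = 1 ∨ l.val = 2 := by omega
      rcases hcases with h0 | h1 | h2
      · rw [h0, pow_zero, mul_one, Upow, Kdpow] at hE
        simp only [Xqm, Matrix.mul_fin_three] at hE
        have h11 := congrArg (fun E : M3 => E 1 1) hE
        simp at h11
      · rw [h1, pow_one, Upow, Kdpow] at hE
        simp only [Xqm, Cqm, Matrix.mul_fin_three] at hE
        have h00 := congrArg (fun E : M3 => E 0 0) hE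
        simp at h00
      · rw [h2, show Cqm ^ 2 = Cq2m by rw [pow_two, hCq2], Upow, Kdpow] at hE
        simp only [Xqm, Cq2m, Matrix.mul_fin_three] at hE
        have h00 := congrArg (fun E : M3 => E 0 0) hE
        simp at h00

lemma ffinj : Function.Injective ff := by
  rintro ⟨n, h⟩ ⟨n', h'⟩ he
  have h2 : ff (n', h') * ff (act h'⁻¹ (-n'), h'⁻¹) = 1 := by
    rw [ffmul]
    show ff (n' + act h' (act h'⁻¹ (-n')), h' * h'⁻¹) = 1
    rw [dact, mul_inv_cancel, add_neg_cancel]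
    exact ff_one
  have h1 : ff (n + act h (act h'⁻¹ (-n')), h * h'⁻¹) = 1 := by
    have e := ffmul (n, h) (act h'⁻¹ (-n'), h'⁻¹)
    rw [he] at e
    exact e.symm.trans h2
  obtain ⟨hn0, hh0⟩ := K0 _ _ h1
  have hh : h = h' := by
    have := mul_inv_eq_one.mp hh0
    exact this
  subst hh
  have hn : n + act h (act h⁻¹ (-n')) = 0 := hn0
  rw [dact] at hn
  have : n = n' := by
    have := add_neg_eq_zero.mp hn
    exact this
  rw [this]

-- ===== closure equals range =====
lemma gA_mem : gA ∈ Subgroup.closure ({gA, gB} : Set GL3) :=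
  Subgroup.subset_closure (by simp)
lemma gB_mem : gB ∈ Subgroup.closure ({gA, gB} : Set GL3) :=
  Subgroup.subset_closure (by simp)
lemma gU_mem : gU ∈ Subgroup.closure ({gA, gB} : Set GL3) := mul_mem gA_mem gA_mem
lemma gC_mem : gC ∈ Subgroup.closure ({gA, gB} : Set GL3) := mul_mem (inv_mem gA_mem) gB_mem
lemma gX_mem : gX ∈ Subgroup.closure ({gA, gB} : Set GL3) :=
  mul_mem (mul_mem gA_mem gB_mem) gA_mem
lemma gK_mem : gK ∈ Subgroup.closure ({gA, gB} : Set GL3) := by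
  refine mul_mem (mul_mem (mul_mem (mul_mem (mul_mem gA_mem gB_mem) (inv_mem gA_mem))
    (inv_mem gA_mem)) (inv_mem gB_mem)) gA_mem

lemma ffA : ff ((2, 2), DihedralGroup.sr 1) = gA := by
  show gU ^ (2 : ZMod 9).val * gK ^ (2 : ZMod 3).val * (gX * gC ^ (1 : ZMod 3).val) = gA
  rw [show (2 : ZMod 9).val = 2 from rfl, show (2 : ZMod 3).val = 2 from rfl,
    show (1 : ZMod 3).val = 1 from rfl, pow_two, pow_two, pow_one]
  exact LA.symm

lemma ffB : ff ((2, 2), DihedralGroup.sr 2) = gB := by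
  show gU ^ (2 : ZMod 9).val * gK ^ (2 : ZMod 3).val * (gX * gC ^ (2 : ZMod 3).val) = gB
  rw [show (2 : ZMod 9).val = 2 from rfl, show (2 : ZMod 3).val = 2 from rfl,
    pow_two, pow_two, pow_two]
  exact LB.symm

lemma closure_eq : Subgroup.closure ({gA, gB} : Set GL3) = SG := by
  apply le_antisymm
  · rw [Subgroup.closure_le]
    rintro x (rfl | rfl)
    · exact ⟨((2, 2), DihedralGroup.sr 1), ffA⟩
    · exact ⟨((2, 2), DihedralGroup.sr 2), ffB⟩
  · rintro x ⟨⟨n, h⟩, rfl⟩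
    have hAAmem : AA n ∈ Subgroup.closure ({gA, gB} : Set GL3) :=
      mul_mem (pow_mem gU_mem _) (pow_mem gK_mem _)
    have hMMmem : MM h ∈ Subgroup.closure ({gA, gB} : Set GL3) := by
      cases h with
      | r l => exact pow_mem gC_mem _
      | sr l => exact mul_mem gX_mem (pow_mem gC_mem _)
    exact mul_mem hAAmem hMMmem

theorem main_card : Nat.card (Subgroup.closure ({gA, gB} : Set GL3)) = 162 := by
  rw [closure_eq]
  have h1 : Nat.card SG = Nat.card (Set.range ff) := rfl
  rw [h1, Nat.card_range_of_injective ffinj]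
  rw [Nat.card_prod, Nat.card_prod, Nat.card_zmod, Nat.card_zmod, DihedralGroup.nat_card]

/-- The subgroup of GL(3,ℂ) generated by a and b is a finite group of order 162. -/
theorem stmt14 (a b : GL (Fin 3) ℂ)
    (ha : (a : Matrix (Fin 3) (Fin 3) ℂ) = ma)
    (hb : (b : Matrix (Fin 3) (Fin 3) ℂ) = mb) :
    Nat.card (Subgroup.closure ({a, b} : Set (GL (Fin 3) ℂ))) = 162 := by
  have ea : a = gA := Units.ext (by rw [ha, hma]; rfl)
  have eb : b = gB := Units.ext (by rw [hb, hmb]; rfl)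
  subst ea
  subst eb
  exact main_card
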